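/- Suppose ∇²₁₁G is L₂-Lipschitz in z, ∇₁F is L₁-Lipschitz in z, G(·,x) is μ_G-strongly convex with L_G-Lipschitz gradient, and ‖∇₁F(z*(x),x)‖ ≤ C_F for all x. Let D_v(z,v,x) = ∇²₁₁G(z,x)v + ∇₁F(z,x) and v*(x) = -[∇²₁₁G(z*(x),x)]⁻¹∇₁F(z*(x),x). Then there exists L_v > 0 such that ‖D_v(z,v,x)‖² ≤ L_v²(‖z - z*(x)‖² + ‖v - v*(x)‖²); in particular one may take L_v = √2 · max(L₂C_F/μ_G + L₁, L_G). -/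

import Mathlib

open Set

abbrev Vec (n : ℕ) := EuclideanSpace ℝ (Fin n)

local notation "⟪" x ", " y "⟫" => @inner ℝ _ _ x y

/-- Strong monotonicity of the gradient of a strongly convex function. -/
lemma strong_mono {E : Type*} [NormedAddCommGroup E] [InnerProductSpace ℝ E] [CompleteSpace E]
    {μ : ℝ} {f : E → ℝ} {g : E → E}
    (hsc : StrongConvexOn univ μ f) (hg : ∀ z, HasGradientAt f (g z) z) (a b : E) :
    μ * ‖b - a‖ ^ 2 ≤ ⟪g b - g a, b - a⟫ := by
  set d := b - a with hd
  set c : ℝ → E := fun t => a + t • d with hc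
  have hconv : ConvexOn ℝ univ (fun z => f z - μ / 2 * ‖z‖ ^ 2) :=
    strongConvexOn_iff_convex.mp hsc
  set φ : ℝ → ℝ := fun t => f (c t) - μ / 2 * ‖c t‖ ^ 2 with hφ
  have hφconv : ConvexOn ℝ univ φ := by
    have := hconv.comp_affineMap (AffineMap.lineMap a b : ℝ →ᵃ[ℝ] E)
    simp only [preimage_univ] at this
    convert this using 1
    case e'_4 | e'_5 | e'_6 | e'_9 => rfl
    funext t
    simp only [φ, hc, AffineMap.lineMap_apply, hd, Function.comp, vsub_eq_sub,
      vadd_eq_add]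
    rw [add_comm (t • (b - a)) a]
  have hcder : ∀ t : ℝ, HasDerivAt c d t := by
    intro t
    simpa [hc] using ((hasDerivAt_id t).smul_const d).const_add a
  have hφder : ∀ t : ℝ, HasDerivAt φ (⟪g (c t), d⟫ - μ * ⟪a, d⟫ - μ * t * ‖d‖ ^ 2) t := by
    intro t
    have h0 : HasFDerivAt f (InnerProductSpace.toDual ℝ E (g (c t))) (c t) := hg (c t)
    have h1 : HasDerivAt (fun t => f (c t))
        ((InnerProductSpace.toDual ℝ E (g (c t))) d) t :=
      h0.comp_hasDerivAt t (hcder t)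
    rw [InnerProductSpace.toDual_apply_apply] at h1
    have h2 : HasDerivAt (fun t : ℝ => μ / 2 *
        (‖a‖ ^ 2 + 2 * (t * ⟪a, d⟫) + t ^ 2 * ‖d‖ ^ 2))
        (μ / 2 * (2 * ⟪a, d⟫ + 2 * t * ‖d‖ ^ 2)) t := by
      have ha : HasDerivAt (fun t : ℝ => ‖a‖ ^ 2 + 2 * (t * ⟪a, d⟫) + t ^ 2 * ‖d‖ ^ 2)
          (2 * ⟪a, d⟫ + 2 * t * ‖d‖ ^ 2) t := by
        have := (((hasDerivAt_id t).mul_const ⟪a, d⟫).const_mul 2).const_add (‖a‖ ^ 2)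
        have hpow := (hasDerivAt_pow 2 t).mul_const (‖d‖ ^ 2)
        convert this.add hpow using 1
        case e'_4 | e'_5 | e'_8 => rfl
        ring
      exact ha.const_mul (μ / 2)
    have heq : (fun t : ℝ => μ / 2 * ‖c t‖ ^ 2) =
        fun t : ℝ => μ / 2 * (‖a‖ ^ 2 + 2 * (t * ⟪a, d⟫) + t ^ 2 * ‖d‖ ^ 2) := by
      funext t
      rw [hc]
      simp only
      rw [norm_add_sq_real, real_inner_smul_right, norm_smul]
      simp only [mul_pow, Real.norm_eq_abs, sq_abs]
      try ring
    rw [hφ]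
    have := h1.sub (heq ▸ h2)
    convert this using 1
    case e'_4 | e'_5 | e'_8 => rfl
    ring
  have hle1 := hφconv.le_slope_of_hasDerivAt (mem_univ (0:ℝ)) (mem_univ 1) one_pos (hφder 0)
  have hle2 := hφconv.slope_le_of_hasDerivAt (mem_univ (0:ℝ)) (mem_univ 1) one_pos (hφder 1)
  have key := hle1.trans hle2
  have hc0 : c 0 = a := by simp [hc]
  have hc1 : c 1 = b := by simp [hc, hd]
  rw [hc0, hc1] at key
  rw [inner_sub_left]
  nlinarith [key]

/-- Coercivity of the Hessian of a function with strongly monotone gradient. -/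
lemma hess_coercive {E : Type*} [NormedAddCommGroup E] [InnerProductSpace ℝ E]
    {μ : ℝ} {g : E → E} {H : E →L[ℝ] E} {z0 : E}
    (hmono : ∀ a b, μ * ‖b - a‖ ^ 2 ≤ ⟪g b - g a, b - a⟫)
    (hH : HasFDerivAt g H z0) (h : E) :
    μ * ‖h‖ ^ 2 ≤ ⟪h, H h⟫ := by
  set c : ℝ → E := fun t => z0 + t • h with hc
  have hcder : ∀ t : ℝ, HasDerivAt c h t := by
    intro t
    simpa [hc] using ((hasDerivAt_id t).smul_const h).const_add z0
  set ψ : ℝ → ℝ := fun t => ⟪h, g (c t)⟫ with hψ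
  have hc0 : c 0 = z0 := by simp [hc]
  have hder : HasDerivAt ψ ⟪h, H h⟫ 0 := by
    have h1 : HasDerivAt (fun t => g (c t)) (H h) 0 := by
      have hH' : HasFDerivAt g H (c 0) := hc0 ▸ hH
      exact hH'.comp_hasDerivAt 0 (hcder 0)
      
    have h2 := ((innerSL ℝ h).hasFDerivAt (x := g (c 0))).comp_hasDerivAt 0 h1
    exact h2
  have htend : Filter.Tendsto (slope ψ 0) (nhdsWithin 0 {(0:ℝ)}ᶜ) (nhds ⟪h, H h⟫) :=
    hasDerivAt_iff_tendsto_slope.mp hder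
  have htend' : Filter.Tendsto (slope ψ 0) (nhdsWithin 0 (Set.Ioi 0)) (nhds ⟪h, H h⟫) :=
    htend.mono_left (nhdsWithin_mono _ (fun x hx => ne_of_gt hx))
  refine ge_of_tendsto htend' ?_
  refine eventually_nhdsWithin_of_forall (fun t ht => ?_)
  have ht' : (0:ℝ) < t := ht
  have key := hmono z0 (z0 + t • h)
  have hsub : z0 + t • h - z0 = t • h := by abel
  rw [hsub, inner_smul_right, norm_smul] at key
  have hψt : ψ t - ψ 0 = ⟪g (c t) - g z0, h⟫ := by
    rw [hψ]
    simp only [hc0]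
    rw [inner_sub_left, real_inner_comm (g (c t)) h, real_inner_comm (g z0) h]
  have hct : c t = z0 + t • h := rfl
  rw [slope_def_field, hψt, hct, sub_zero, le_div_iff₀ ht']
  rw [Real.norm_eq_abs, abs_of_pos ht'] at key
  nlinarith [key]


/-- Bound `‖D_v(z,v,x)‖² ≤ L_v²(‖z - z*(x)‖² + ‖v - v*(x)‖²)` with
`L_v = √2 · max(L₂ C_F/μ_G + L₁, L_G)`. -/
theorem stmt2 {p d : ℕ} (μG L₁ L₂ LG CF : ℝ)
    (hμG : 0 < μG) (hL₁ : 0 < L₁) (hL₂ : 0 < L₂) (hLG : 0 < LG) (hCF : 0 < CF)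
    (G F : Vec p → Vec d → ℝ)
    (G1 : Vec p → Vec d → Vec p)                 -- ∇₁G
    (F1 : Vec p → Vec d → Vec p)                 -- ∇₁F
    (H11 : Vec p → Vec d → (Vec p →L[ℝ] Vec p))  -- ∇²₁₁G
    (zstar vstar : Vec d → Vec p)
    -- G(·,x) is μG-strongly convex with LG-Lipschitz gradient G1 and Hessian H11
    (hsc : ∀ x, StrongConvexOn univ μG (fun z => G z x))
    (hG1 : ∀ z x, HasGradientAt (fun z' => G z' x) (G1 z x) z)
    (hGlip : ∀ x z z', ‖G1 z x - G1 z' x‖ ≤ LG * ‖z - z'‖)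
    (hH11 : ∀ z x, HasFDerivAt (fun z' => G1 z' x) (H11 z x) z)
    -- ∇²₁₁G is L₂-Lipschitz in z, ∇₁F is L₁-Lipschitz in z
    (hHlip : ∀ x z z', ‖H11 z x - H11 z' x‖ ≤ L₂ * ‖z - z'‖)
    (hFlip : ∀ x z z', ‖F1 z x - F1 z' x‖ ≤ L₁ * ‖z - z'‖)
    -- z*(x) minimizes G(·,x), and ‖∇₁F(z*(x),x)‖ ≤ C_F
    (hmin : ∀ x, IsMinOn (fun z => G z x) univ (zstar x))
    (hCFbound : ∀ x, ‖F1 (zstar x) x‖ ≤ CF)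
    -- v*(x) = -[∇²₁₁G(z*(x),x)]⁻¹ ∇₁F(z*(x),x)
    (hv : ∀ x, H11 (zstar x) x (vstar x) = - F1 (zstar x) x) :
    ∃ Lv : ℝ, 0 < Lv ∧ Lv = Real.sqrt 2 * max (L₂ * CF / μG + L₁) LG ∧
      ∀ (z v : Vec p) (x : Vec d),
        ‖H11 z x v + F1 z x‖ ^ 2 ≤ Lv ^ 2 * (‖z - zstar x‖ ^ 2 + ‖v - vstar x‖ ^ 2) := by
  have hmax : 0 < max (L₂ * CF / μG + L₁) LG := lt_max_of_lt_right hLG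
  refine ⟨Real.sqrt 2 * max (L₂ * CF / μG + L₁) LG,
    mul_pos (Real.sqrt_pos.mpr two_pos) hmax, rfl, ?_⟩
  intro z v x
  set A := L₂ * CF / μG + L₁ with hA
  set M := max A LG with hM
  have hLv2 : (Real.sqrt 2 * M) ^ 2 = 2 * M ^ 2 := by
    rw [mul_pow, Real.sq_sqrt two_pos.le]
  have hHnorm : ∀ z', ‖H11 z' x‖ ≤ LG := fun z' =>
    (hH11 z' x).le_of_lip' hLG.le (Filter.Eventually.of_forall fun z'' => hGlip x z'' z')
  have hmono := strong_mono (hsc x) (fun z' => hG1 z' x)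
  have hcoer := hess_coercive hmono (hH11 (zstar x) x) (vstar x)
  have hvnorm : ‖vstar x‖ ≤ CF / μG := by
    have h2 : ⟪vstar x, H11 (zstar x) x (vstar x)⟫ ≤
        ‖vstar x‖ * ‖H11 (zstar x) x (vstar x)‖ := real_inner_le_norm _ _
    rw [hv x, norm_neg] at h2
    rw [hv x] at hcoer
    have h3 : ‖F1 (zstar x) x‖ ≤ CF := hCFbound x
    rw [le_div_iff₀ hμG]
    nlinarith [norm_nonneg (vstar x), norm_nonneg (F1 (zstar x) x), hcoer, hCF, hμG]
  have hdecomp : H11 z x v + F1 z x = H11 z x (v - vstar x) +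
      ((H11 z x - H11 (zstar x) x) (vstar x)) + (F1 z x - F1 (zstar x) x) := by
    simp only [ContinuousLinearMap.sub_apply, map_sub, hv x]
    abel
  have hb1 : ‖H11 z x (v - vstar x)‖ ≤ LG * ‖v - vstar x‖ :=
    le_trans ((H11 z x).le_opNorm _)
      (mul_le_mul_of_nonneg_right (hHnorm z) (norm_nonneg _))
  have hb2 : ‖(H11 z x - H11 (zstar x) x) (vstar x)‖ ≤
      (L₂ * ‖z - zstar x‖) * (CF / μG) := by
    refine le_trans ((H11 z x - H11 (zstar x) x).le_opNorm _) ?_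
    have := hHlip x z (zstar x)
    have hnn : (0:ℝ) ≤ ‖H11 z x - H11 (zstar x) x‖ := norm_nonneg _
    have hvn : (0:ℝ) ≤ ‖vstar x‖ := norm_nonneg _
    exact mul_le_mul this hvnorm hvn (by positivity)
  have hb3 : ‖F1 z x - F1 (zstar x) x‖ ≤ L₁ * ‖z - zstar x‖ := hFlip x z (zstar x)
  have hD : ‖H11 z x v + F1 z x‖ ≤ A * ‖z - zstar x‖ + LG * ‖v - vstar x‖ := by
    rw [hdecomp]
    refine le_trans (norm_add₃_le) ?_
    rw [hA]
    have : (L₂ * ‖z - zstar x‖) * (CF / μG) = (L₂ * CF / μG) * ‖z - zstar x‖ := by ring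
    rw [this] at hb2
    linarith
  rw [hLv2]
  have hAM : A ≤ M := le_max_left _ _
  have hLGM : LG ≤ M := le_max_right _ _
  have ha : (0:ℝ) ≤ ‖z - zstar x‖ := norm_nonneg _
  have hb : (0:ℝ) ≤ ‖v - vstar x‖ := norm_nonneg _
  have hDn : (0:ℝ) ≤ ‖H11 z x v + F1 z x‖ := norm_nonneg _
  have hA0 : (0:ℝ) ≤ A := by rw [hA]; positivity
  nlinarith [sq_nonneg (A * ‖z - zstar x‖ - LG * ‖v - vstar x‖),
    mul_le_mul hD hD hDn (by positivity),
    mul_le_mul hAM hAM hA0 (hA0.trans hAM),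
    mul_le_mul hLGM hLGM hLG.le (hLG.le.trans hLGM),
    mul_nonneg ha hb, sq_nonneg (‖z - zstar x‖ - ‖v - vstar x‖),
    sq_nonneg (‖z - zstar x‖ + ‖v - vstar x‖)]
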